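/- Let P and Q be disjoint clusters (P ∩ Q = ∅). Then the bisector of P and Q with respect to the farthest distance, namely the set {t ∈ ℝ² : d_f(t,P) = d_f(t,Q)}, has empty interior in ℝ². -/

import Mathlib

open scoped NNReal

/-- A point of the Euclidean plane. -/
abbrev Pt := EuclideanSpace ℝ (Fin 2)

/-- The farthest distance from a point `t` to a (nonempty) cluster `P`:
`d_f(t,P) = max_{p ∈ P} dist t p`. -/
noncomputable def hdist (t : Pt) (P : Finset Pt) : ℝ :=
  ((P.sup fun p => nndist t p : ℝ≥0) : ℝ)

/-- The farthest distance is attained at some point of the cluster. -/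
lemma hdist_attained (t : Pt) {P : Finset Pt} (hP : P.Nonempty) :
    ∃ p ∈ P, hdist t P = dist t p := by
  obtain ⟨p, hp, hsup⟩ := Finset.exists_mem_eq_sup P hP (fun p => nndist t p)
  refine ⟨p, hp, ?_⟩
  rw [hdist, hsup]
  exact (dist_nndist t p).symm

/-- The perpendicular bisector of two distinct points has empty interior. -/
lemma perp_bisector_interior_empty {p q : Pt} (hpq : p ≠ q) :
    interior {t : Pt | dist t p = dist t q} = ∅ := by
  by_contra h
  obtain ⟨x, hx⟩ := Set.nonempty_iff_ne_empty.2 h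
  set v : Pt := q - p with hv
  have hvne : v ≠ 0 := sub_ne_zero.2 (Ne.symm hpq)
  obtain ⟨ε, hε, hball⟩ := Metric.isOpen_iff.1 isOpen_interior x hx
  -- a key computation: membership in the set gives a fixed inner product
  have key : ∀ t : Pt, dist t p = dist t q →
      2 * (inner ℝ t v) = inner ℝ (p + q) v := by
    intro t ht
    have h2 : ‖t - p‖ ^ 2 = ‖t - q‖ ^ 2 := by
      rw [← dist_eq_norm, ← dist_eq_norm, ht]
    have h3 : (inner ℝ (t - p) (t - p)) = inner ℝ (t - q) (t - q) := by
      rwa [real_inner_self_eq_norm_sq, real_inner_self_eq_norm_sq]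
    have := h3
    simp only [inner_sub_sub_self] at this
    simp only [hv, inner_add_left, inner_sub_right]
    linarith [real_inner_comm p t, real_inner_comm q t, real_inner_comm q p, this]
  -- move x in direction v
  have hvpos : 0 < ‖v‖ := norm_pos_iff.2 hvne
  set δ : ℝ := ε / (2 * ‖v‖) with hδ
  have hδpos : 0 < δ := div_pos hε (mul_pos two_pos hvpos)
  have hy : x + δ • v ∈ Metric.ball x ε := by
    rw [Metric.mem_ball, dist_eq_norm]
    have h4 : x + δ • v - x = δ • v := by abel
    have h5 : δ * ‖v‖ = ε / 2 := by
      rw [hδ]; field_simp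
    rw [h4, norm_smul, Real.norm_eq_abs, abs_of_pos hδpos, h5]
    linarith
  have hxmem : x ∈ {t : Pt | dist t p = dist t q} := interior_subset hx
  have hymem : x + δ • v ∈ {t : Pt | dist t p = dist t q} :=
    interior_subset (hball hy)
  have hxmem' : dist x p = dist x q := hxmem
  have hymem' : dist (x + δ • v) p = dist (x + δ • v) q := hymem
  have e1 := key x hxmem'
  have e2 := key (x + δ • v) hymem'
  rw [inner_add_left, real_inner_smul_left] at e2
  have hvv : (inner ℝ v v) = ‖v‖ ^ 2 := real_inner_self_eq_norm_sq v
  have : δ * ‖v‖ ^ 2 = 0 := by nlinarith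
  have : ‖v‖ ^ 2 = 0 := by
    rcases mul_eq_zero.1 this with h | h
    · exact absurd h (ne_of_gt hδpos)
    · exact h
  exact hvne (by simpa using (pow_eq_zero_iff (n := 2) (by norm_num)).1 this)

/-- A union of two closed sets with empty interior has empty interior. -/
lemma interior_union_empty {s t : Set Pt} (hs : IsClosed s)
    (hsi : interior s = ∅) (hti : interior t = ∅) :
    interior (s ∪ t) = ∅ := by
  by_contra h
  obtain ⟨x, hx⟩ := Set.nonempty_iff_ne_empty.2 h
  set U := interior (s ∪ t)
  have hUo : IsOpen U := isOpen_interior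
  have hUsub : U ⊆ s ∪ t := interior_subset
  have hUt : U \ s ⊆ t := fun y hy => (hUsub hy.1).resolve_left hy.2
  have hopen : IsOpen (U \ s) := hUo.sdiff hs
  have hUtempty : U \ s = ∅ := by
    have := hopen.subset_interior_iff.2 hUt
    rw [hti] at this
    exact Set.subset_empty_iff.1 this
  have hUs : U ⊆ s := fun y hy => by
    by_contra hys
    exact absurd (Set.eq_empty_iff_forall_notMem.1 hUtempty y) (fun h => h ⟨hy, hys⟩)
  have := hUo.subset_interior_iff.2 hUs
  rw [hsi] at this
  exact this hx

/-- A finite union of closed sets with empty interior has empty interior. -/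
lemma interior_biUnion_empty (s : Finset (Pt × Pt))
    (F : Pt × Pt → Set Pt) (hF : ∀ r ∈ s, IsClosed (F r))
    (hFi : ∀ r ∈ s, interior (F r) = ∅) :
    interior (⋃ r ∈ s, F r) = ∅ := by
  classical
  induction s using Finset.induction_on with
  | empty => simp
  | insert a s' hnotmem ih =>
    rw [Finset.set_biUnion_insert]
    exact interior_union_empty (hF a (Finset.mem_insert_self a s'))
      (hFi a (Finset.mem_insert_self a s'))
      (ih (fun r hr => hF r (Finset.mem_insert_of_mem hr))
        (fun r hr => hFi r (Finset.mem_insert_of_mem hr)))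

/-- For disjoint clusters `P` and `Q`, the bisector
`{t : d_f(t,P) = d_f(t,Q)}` with respect to the farthest distance has empty
interior in the plane. -/
theorem bisector_empty_interior (P Q : Finset Pt)
    (hP : P.Nonempty) (hQ : Q.Nonempty)
    (hdisj : (P : Set Pt) ∩ (Q : Set Pt) = ∅) :
    interior {t : Pt | hdist t P = hdist t Q} = ∅ := by
  set F : Pt × Pt → Set Pt := fun r => {t : Pt | dist t r.1 = dist t r.2}
  have hsub : {t : Pt | hdist t P = hdist t Q} ⊆ ⋃ r ∈ P ×ˢ Q, F r := by
    intro t ht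
    obtain ⟨p, hp, hpd⟩ := hdist_attained t hP
    obtain ⟨q, hq, hqd⟩ := hdist_attained t hQ
    refine Set.mem_biUnion (show (p, q) ∈ P ×ˢ Q from Finset.mem_product.2 ⟨hp, hq⟩) ?_
    show dist t p = dist t q
    rw [← hpd, ← hqd]; exact ht
  have hbig : interior (⋃ r ∈ P ×ˢ Q, F r) = ∅ := by
    apply interior_biUnion_empty
    · intro r _
      exact isClosed_eq (Continuous.dist continuous_id continuous_const)
        (Continuous.dist continuous_id continuous_const)
    · intro r hr
      have hmem := Finset.mem_product.1 hr
      have hne : r.1 ≠ r.2 := by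
        intro h
        have : r.1 ∈ (P : Set Pt) ∩ (Q : Set Pt) := ⟨hmem.1, h ▸ hmem.2⟩
        rw [hdisj] at this
        exact this
      exact perp_bisector_interior_empty hne
  have := interior_mono hsub
  rw [hbig] at this
  exact Set.subset_empty_iff.1 this
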